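/- Assume 0 < y*_int ≤ y*_p. Then every solution y of the reduced hybrid SIS dynamics with y(0) ∈ (0,1] converges monotonically to y*_p: the function t ↦ |y(t) − y*_p| is nonincreasing and y(t) → y*_p as t → ∞. -/

import Mathlib

/-- A solution of the reduced hybrid SIS dynamics obtained under timescale
separation: a differentiable y : [0,∞) → [0,1] following the dynamics with
β = β_p below the threshold y*_int = c_P/(L(1−α)β_p), β = αβ_p above it, and a
convex combination (parametrized by z ∈ [0,1]) at the threshold. -/
def IsReducedSISSol (βp α γ cP L : ℝ) (y : ℝ → ℝ) : Prop :=
  (∀ t ≥ (0:ℝ), y t ∈ Set.Icc (0:ℝ) 1) ∧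
  ∀ t ≥ (0:ℝ),
    (y t < cP / (L * (1 - α) * βp) →
      HasDerivAt y (((1 - y t) * βp - γ) * y t) t) ∧
    (cP / (L * (1 - α) * βp) < y t →
      HasDerivAt y (((1 - y t) * (α * βp) - γ) * y t) t) ∧
    (y t = cP / (L * (1 - α) * βp) → ∃ z ∈ Set.Icc (0:ℝ) 1,
      HasDerivAt y
        (((1 - cP / (L * (1 - α) * βp)) * (z + α * (1 - z)) * βp - γ) *
          (cP / (L * (1 - α) * βp))) t)

set_option maxHeartbeats 2000000 in
/-- If 0 < y*_int ≤ y*_p, every solution of the reduced hybrid SIS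
dynamics with y(0) ∈ (0,1] converges monotonically (in the sense that
|y(t) − y*_p| is nonincreasing) to y*_p = 1 − γ/(αβ_p). -/
theorem reduced_sis_converges_to_yp
    (βp α γ cP L : ℝ)
    (hβp : βp > 0) (hα : α ∈ Set.Ioo (0:ℝ) 1) (hγ : γ > 0) (hcP : cP > 0) (hL : L > 0)
    (hyint_pos : 0 < cP / (L * (1 - α) * βp))
    (hyint_le : cP / (L * (1 - α) * βp) ≤ 1 - γ / (α * βp))
    (y : ℝ → ℝ) (hsol : IsReducedSISSol βp α γ cP L y) (hy0 : y 0 ∈ Set.Ioc (0:ℝ) 1) :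
    AntitoneOn (fun t => |y t - (1 - γ / (α * βp))|) (Set.Ici 0) ∧
    Filter.Tendsto y Filter.atTop (nhds (1 - γ / (α * βp))) := by
  obtain ⟨hrange, hdyn⟩ := hsol
  obtain ⟨hα0, hα1⟩ := hα
  obtain ⟨hy00, hy01⟩ := hy0
  set c : ℝ := cP / (L * (1 - α) * βp) with hcdef
  set p : ℝ := 1 - γ / (α * βp) with hpdef
  have hαβ : 0 < α * βp := mul_pos hα0 hβp
  have hp_pos : 0 < p := lt_of_lt_of_le hyint_pos hyint_le
  have hid : ∀ u : ℝ, α*βp*(p - u) = (1 - u)*(α*βp) - γ := by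
    intro u; rw [hpdef]; field_simp; ring
  -- differentiability everywhere on [0,∞)
  have hdiff : ∀ t : ℝ, 0 ≤ t → DifferentiableAt ℝ y t := by
    intro t ht
    obtain ⟨h1, h2, h3⟩ := hdyn t ht
    rcases lt_trichotomy (y t) c with h | h | h
    · exact (h1 h).differentiableAt
    · obtain ⟨z, hz, hd⟩ := h3 h
      exact hd.differentiableAt
    · exact (h2 h).differentiableAt
  have hcont : ∀ s : Set ℝ, s ⊆ Set.Ici 0 → ContinuousOn y s := by
    intro s hs t ht
    exact ((hdiff t (hs ht)).continuousAt).continuousWithinAt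
  -- lower bound on the derivative in the region y ≤ p
  have Dpos : ∀ t : ℝ, 0 ≤ t → y t ≤ p →
      ∃ d, HasDerivAt y d t ∧ α*βp*(p - y t)*(y t) ≤ d := by
    intro t ht hyp
    obtain ⟨hy0r, hy1r⟩ := hrange t ht
    obtain ⟨h1, h2, h3⟩ := hdyn t ht
    rcases lt_trichotomy (y t) c with h | h | h
    · refine ⟨_, h1 h, ?_⟩
      rw [show α*βp*(p - y t)*(y t) = ((1 - y t)*(α*βp) - γ)*(y t) from by rw [hid (y t)]]
      nlinarith [mul_nonneg (mul_nonneg (mul_nonneg (sub_nonneg.2 hy1r)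
        (sub_nonneg.2 hα1.le)) hβp.le) hy0r]
    · obtain ⟨z, hzmem, hd⟩ := h3 h
      obtain ⟨hz0, hz1⟩ := hzmem
      refine ⟨_, hd, ?_⟩
      rw [h]
      have hc1 : c ≤ 1 := by rw [← h]; exact hy1r
      rw [show α*βp*(p - c)*c = ((1 - c)*(α*βp) - γ)*c from by rw [hid c]]
      nlinarith [mul_nonneg (mul_nonneg (mul_nonneg (mul_nonneg (sub_nonneg.2 hc1)
        hβp.le) hz0) (sub_nonneg.2 hα1.le)) hyint_pos.le]
    · refine ⟨_, h2 h, le_of_eq ?_⟩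
      rw [show α*βp*(p - y t)*(y t) = ((1 - y t)*(α*βp) - γ)*(y t) from by rw [hid (y t)]]
  -- exact derivative in the region y > p
  have Dneg : ∀ t : ℝ, 0 ≤ t → p < y t → HasDerivAt y (α*βp*(p - y t)*(y t)) t := by
    intro t ht h
    obtain ⟨h1, h2, h3⟩ := hdyn t ht
    have hcy : c < y t := lt_of_le_of_lt hyint_le h
    have hd := h2 hcy
    rw [show α*βp*(p - y t)*(y t) = ((1 - y t)*(α*βp) - γ)*(y t) from by rw [hid (y t)]]
    exact hd
  -- L1: upper invariance
  have L1 : ∀ t0 t1 : ℝ, 0 ≤ t0 → t0 ≤ t1 → y t1 ≤ max (y t0) p := by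
    intro t0 t1 ht0 ht01
    by_contra hcon
    push_neg at hcon
    set M := max (y t0) p with hM
    set S := Set.Icc t0 t1 ∩ y ⁻¹' Set.Iic M with hSdef
    have hsub : Set.Icc t0 t1 ⊆ Set.Ici 0 := fun x hx => Set.mem_Ici.2 (ht0.trans hx.1)
    have hScl : IsClosed S :=
      (hcont _ hsub).preimage_isClosed_of_isClosed isClosed_Icc isClosed_Iic
    have hSne : S.Nonempty := ⟨t0, ⟨le_refl t0, ht01⟩, Set.mem_preimage.2 (Set.mem_Iic.2 (le_max_left _ _))⟩
    have hSbd : BddAbove S := bddAbove_Icc.mono Set.inter_subset_left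
    set s := sSup S with hsdef
    have hsS : s ∈ S := hScl.csSup_mem hSne hSbd
    obtain ⟨⟨hs0, hs1⟩, hsy⟩ := hsS
    have hsy' : y s ≤ M := hsy
    have hslt : s < t1 := by
      rcases lt_or_eq_of_le hs1 with h | h
      · exact h
      · exfalso; rw [h] at hsy'; exact absurd hsy' (not_le.2 hcon)
    have hgt : ∀ x, s < x → x ≤ t1 → M < y x := by
      intro x hsx hxt
      by_contra hle
      push_neg at hle
      have hxS : x ∈ S := ⟨⟨hs0.trans hsx.le, hxt⟩, hle⟩
      exact absurd (le_csSup hSbd hxS) (not_le.2 hsx)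
    have hanti : StrictAntiOn y (Set.Icc s t1) := by
      apply strictAntiOn_of_deriv_neg (convex_Icc s t1)
        (hcont _ (fun x hx => Set.mem_Ici.2 ((ht0.trans hs0).trans hx.1)))
      intro x hx
      rw [interior_Icc] at hx
      have hx0 : (0:ℝ) ≤ x := le_trans (ht0.trans hs0) hx.1.le
      have hyx : p < y x := lt_of_le_of_lt (le_max_right _ _) (hgt x hx.1 hx.2.le)
      rw [(Dneg x hx0 hyx).deriv]
      have hypx : 0 < y x := lt_trans hp_pos hyx
      nlinarith [mul_pos hαβ hypx]
    have hfin := hanti (Set.left_mem_Icc.2 hslt.le) (Set.right_mem_Icc.2 hslt.le) hslt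
    linarith
  -- L2: lower invariance
  have L2 : ∀ t0 t1 : ℝ, 0 ≤ t0 → t0 ≤ t1 → 0 < y t0 → min (y t0) p ≤ y t1 := by
    intro t0 t1 ht0 ht01 hy0t
    by_contra hcon
    push_neg at hcon
    set m := min (y t0) p with hm
    have hm0 : 0 < m := lt_min hy0t hp_pos
    have hmp : m ≤ p := min_le_right _ _
    set S := Set.Icc t0 t1 ∩ y ⁻¹' Set.Ici m with hSdef
    have hsub : Set.Icc t0 t1 ⊆ Set.Ici 0 := fun x hx => Set.mem_Ici.2 (ht0.trans hx.1)
    have hScl : IsClosed S :=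
      (hcont _ hsub).preimage_isClosed_of_isClosed isClosed_Icc isClosed_Ici
    have hSne : S.Nonempty := ⟨t0, ⟨le_refl t0, ht01⟩, Set.mem_preimage.2 (Set.mem_Ici.2 (min_le_left _ _))⟩
    have hSbd : BddAbove S := bddAbove_Icc.mono Set.inter_subset_left
    set s := sSup S with hsdef
    have hsS : s ∈ S := hScl.csSup_mem hSne hSbd
    obtain ⟨⟨hs0, hs1⟩, hsy⟩ := hsS
    have hsy' : m ≤ y s := hsy
    have hslt : s < t1 := by
      rcases lt_or_eq_of_le hs1 with h | h
      · exact h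
      · exfalso; rw [h] at hsy'; exact absurd hsy' (not_le.2 hcon)
    have hlt : ∀ x, s < x → x ≤ t1 → y x < m := by
      intro x hsx hxt
      by_contra hle
      push_neg at hle
      have hxS : x ∈ S := ⟨⟨hs0.trans hsx.le, hxt⟩, hle⟩
      exact absurd (le_csSup hSbd hxS) (not_le.2 hsx)
    have hs0' : (0:ℝ) ≤ s := ht0.trans hs0
    -- positivity on (s, t1]
    have hpos2 : ∀ x, s < x → x ≤ t1 → 0 < y x := by
      by_contra hnp
      push_neg at hnp
      obtain ⟨τ, hτ1, hτ2, hτ3⟩ := hnp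
      set T := Set.Icc s t1 ∩ y ⁻¹' Set.Iic 0 with hTdef
      have hsub2 : Set.Icc s t1 ⊆ Set.Ici 0 := fun x hx => Set.mem_Ici.2 (hs0'.trans hx.1)
      have hTcl : IsClosed T :=
        (hcont _ hsub2).preimage_isClosed_of_isClosed isClosed_Icc isClosed_Iic
      have hTne : T.Nonempty := ⟨τ, ⟨hτ1.le, hτ2⟩, hτ3⟩
      have hTbd : BddBelow T := bddBelow_Icc.mono Set.inter_subset_left
      set τ0 := sInf T with hτ0def
      have hτ0T : τ0 ∈ T := hTcl.csInf_mem hTne hTbd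
      obtain ⟨⟨hτ0s, hτ0t1⟩, hτ0y⟩ := hτ0T
      have hτ0y' : y τ0 ≤ 0 := hτ0y
      have hsτ0 : s < τ0 := by
        rcases lt_or_eq_of_le hτ0s with h | h
        · exact h
        · exfalso; rw [← h] at hτ0y'; linarith
      have hmid : ∀ x, s < x → x < τ0 → 0 < y x ∧ y x < m := by
        intro x h1 h2
        constructor
        · by_contra hle
          push_neg at hle
          have hxT : x ∈ T := ⟨⟨h1.le, h2.le.trans hτ0t1⟩, hle⟩
          exact absurd (csInf_le hTbd hxT) (not_le.2 h2)
        · exact hlt x h1 (h2.le.trans hτ0t1)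
      have hmono : StrictMonoOn y (Set.Icc s τ0) := by
        apply strictMonoOn_of_deriv_pos (convex_Icc s τ0)
          (hcont _ (fun x hx => Set.mem_Ici.2 (hs0'.trans hx.1)))
        intro x hx
        rw [interior_Icc] at hx
        have hx0 : (0:ℝ) ≤ x := hs0'.trans hx.1.le
        obtain ⟨h01, h02⟩ := hmid x hx.1 hx.2
        obtain ⟨d, hd, hdge⟩ := Dpos x hx0 (le_of_lt (lt_of_lt_of_le h02 hmp))
        rw [hd.deriv]
        have hxp : y x < p := lt_of_lt_of_le h02 hmp
        nlinarith [mul_pos (mul_pos hαβ (sub_pos.2 hxp)) h01]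
      have hfin := hmono (Set.left_mem_Icc.2 hsτ0.le) (Set.right_mem_Icc.2 hsτ0.le) hsτ0
      linarith
    have hmono2 : StrictMonoOn y (Set.Icc s t1) := by
      apply strictMonoOn_of_deriv_pos (convex_Icc s t1)
        (hcont _ (fun x hx => Set.mem_Ici.2 (hs0'.trans hx.1)))
      intro x hx
      rw [interior_Icc] at hx
      have hx0 : (0:ℝ) ≤ x := hs0'.trans hx.1.le
      have h01 : 0 < y x := hpos2 x hx.1 hx.2.le
      have h02 : y x < m := hlt x hx.1 hx.2.le
      obtain ⟨d, hd, hdge⟩ := Dpos x hx0 (le_of_lt (lt_of_lt_of_le h02 hmp))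
      rw [hd.deriv]
      have hxp : y x < p := lt_of_lt_of_le h02 hmp
      nlinarith [mul_pos (mul_pos hαβ (sub_pos.2 hxp)) h01]
    have hfin := hmono2 (Set.left_mem_Icc.2 hslt.le) (Set.right_mem_Icc.2 hslt.le) hslt
    linarith
  -- global positivity
  have hypos : ∀ t : ℝ, 0 ≤ t → 0 < y t := by
    intro t ht
    have h := L2 0 t le_rfl ht hy00
    exact lt_of_lt_of_le (lt_min hy00 hp_pos) h
  -- the monotonicity part
  have hAnti : AntitoneOn (fun t => |y t - p|) (Set.Ici 0) := by
    intro a ha b hb hab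
    have ha' : (0:ℝ) ≤ a := ha
    simp only
    have hmin := L2 a b ha' hab (hypos a ha')
    have hmax := L1 a b ha' hab
    have h1 : y a - p ≤ |y a - p| := le_abs_self _
    have h2 : p - y a ≤ |y a - p| := by rw [abs_sub_comm]; exact le_abs_self _
    have h3 : (0:ℝ) ≤ |y a - p| := abs_nonneg _
    rw [abs_le]
    constructor
    · rcases le_total (y a) p with h | h
      · rw [min_eq_left h] at hmin; linarith
      · rw [min_eq_right h] at hmin; linarith
    · rcases le_total (y a) p with h | h
      · rw [max_eq_right h] at hmax; linarith
      · rw [max_eq_left h] at hmax; linarith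
  -- derivative of the linear part
  have hconv : Filter.Tendsto y Filter.atTop (nhds p) := by
    rcases le_or_gt (y 0) p with hcase | hcase
    · -- nondecreasing case
      have hub : ∀ t : ℝ, 0 ≤ t → y t ≤ p := by
        intro t ht
        have h := L1 0 t le_rfl ht
        rwa [max_eq_right hcase] at h
      have hmono : ∀ ⦃a b : ℝ⦄, 0 ≤ a → a ≤ b → y a ≤ y b := by
        intro a b ha hab
        have h := L2 a b ha hab (hypos a ha)
        rwa [min_eq_left (hub a ha)] at h
      set g : ℝ → ℝ := fun t => y (max t 0) with hg
      have hgmono : Monotone g := by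
        intro a b hab
        exact hmono (le_max_right a 0) (max_le_max hab le_rfl)
      have hgbdd : BddAbove (Set.range g) := by
        refine ⟨1, ?_⟩
        rintro v ⟨t, rfl⟩
        exact (hrange _ (le_max_right t 0)).2
      have hten : Filter.Tendsto g Filter.atTop (nhds (⨆ t, g t)) :=
        tendsto_atTop_ciSup hgmono hgbdd
      set l := ⨆ t, g t with hl
      have hgy : g =ᶠ[Filter.atTop] y := by
        filter_upwards [Filter.eventually_ge_atTop (0:ℝ)] with t ht
        simp [hg, max_eq_left ht]
      have hyten : Filter.Tendsto y Filter.atTop (nhds l) := hten.congr' hgy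
      have hlle : l ≤ p := ciSup_le (fun t => hub _ (le_max_right t 0))
      have hyl : ∀ t : ℝ, 0 ≤ t → y t ≤ l := by
        intro t ht
        have h := le_ciSup hgbdd t
        rwa [show g t = y t from by simp [hg, max_eq_left ht]] at h
      rcases eq_or_lt_of_le hlle with heq | hlt
      · rwa [heq] at hyten
      · exfalso
        set δ := α*βp*(p - l)*(y 0) with hδ
        have hδ0 : 0 < δ := mul_pos (mul_pos hαβ (sub_pos.2 hlt)) hy00
        have hlin : ∀ x : ℝ, HasDerivAt (fun t => δ * t) δ x := by
          intro x
          simpa using (hasDerivAt_id x).const_mul δ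
        have hmg : MonotoneOn (fun t => y t - δ*t) (Set.Ici 0) := by
          apply monotoneOn_of_deriv_nonneg (convex_Ici 0)
          · intro x hx
            exact (((hdiff x hx).sub (hlin x).differentiableAt).continuousAt).continuousWithinAt
          · intro x hx
            rw [interior_Ici] at hx
            exact ((hdiff x hx.le).sub (hlin x).differentiableAt).differentiableWithinAt
          · intro x hx
            rw [interior_Ici] at hx
            obtain ⟨d, hd, hdge⟩ := Dpos x hx.le (hub x hx.le)
            rw [(hd.fun_sub (hlin x)).deriv]
            have h1 : y 0 ≤ y x := hmono le_rfl hx.le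
            have h2 : y x ≤ l := hyl x hx.le
            have hyx0 : 0 < y x := hypos x hx.le
            nlinarith [mul_nonneg (mul_pos hαβ (sub_pos.2 hlt)).le (sub_nonneg.2 h1),
              mul_nonneg (mul_nonneg hαβ.le (sub_nonneg.2 h2)) hyx0.le]
        have hT : (0:ℝ) ≤ 2/δ := div_nonneg (by norm_num) hδ0.le
        have hval := hmg (Set.mem_Ici.2 le_rfl) (Set.mem_Ici.2 hT) hT
        simp only at hval
        have h2δ : δ * (2/δ) = 2 := by field_simp
        have hy1T : y (2/δ) ≤ 1 := (hrange _ hT).2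
        nlinarith
    · -- nonincreasing case
      have hlb : ∀ t : ℝ, 0 ≤ t → p ≤ y t := by
        intro t ht
        have h := L2 0 t le_rfl ht hy00
        rwa [min_eq_right hcase.le] at h
      have hanti : ∀ ⦃a b : ℝ⦄, 0 ≤ a → a ≤ b → y b ≤ y a := by
        intro a b ha hab
        have h := L1 a b ha hab
        rwa [max_eq_left (hlb a ha)] at h
      set g : ℝ → ℝ := fun t => y (max t 0) with hg
      have hganti : Antitone g := by
        intro a b hab
        exact hanti (le_max_right a 0) (max_le_max hab le_rfl)
      have hgbdd : BddBelow (Set.range g) := by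
        refine ⟨0, ?_⟩
        rintro v ⟨t, rfl⟩
        exact (hrange _ (le_max_right t 0)).1
      have hten : Filter.Tendsto g Filter.atTop (nhds (⨅ t, g t)) :=
        tendsto_atTop_ciInf hganti hgbdd
      set l := ⨅ t, g t with hl
      have hgy : g =ᶠ[Filter.atTop] y := by
        filter_upwards [Filter.eventually_ge_atTop (0:ℝ)] with t ht
        simp [hg, max_eq_left ht]
      have hyten : Filter.Tendsto y Filter.atTop (nhds l) := hten.congr' hgy
      have hlge : p ≤ l := le_ciInf (fun t => hlb _ (le_max_right t 0))
      have hyl : ∀ t : ℝ, 0 ≤ t → l ≤ y t := by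
        intro t ht
        have h := ciInf_le hgbdd t
        rwa [show g t = y t from by simp [hg, max_eq_left ht]] at h
      rcases eq_or_lt_of_le hlge with heq | hlt
      · rwa [← heq] at hyten
      · exfalso
        set δ := α*βp*(l - p)*l with hδ
        have hl0 : 0 < l := lt_trans hp_pos hlt
        have hδ0 : 0 < δ := mul_pos (mul_pos hαβ (sub_pos.2 hlt)) hl0
        have hlin : ∀ x : ℝ, HasDerivAt (fun t => δ * t) δ x := by
          intro x
          simpa using (hasDerivAt_id x).const_mul δ
        have hmg : AntitoneOn (fun t => y t + δ*t) (Set.Ici 0) := by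
          apply antitoneOn_of_deriv_nonpos (convex_Ici 0)
          · intro x hx
            exact (((hdiff x hx).add (hlin x).differentiableAt).continuousAt).continuousWithinAt
          · intro x hx
            rw [interior_Ici] at hx
            exact ((hdiff x hx.le).add (hlin x).differentiableAt).differentiableWithinAt
          · intro x hx
            rw [interior_Ici] at hx
            have hpx : p < y x := lt_of_lt_of_le hlt (hyl x hx.le)
            have hd := Dneg x hx.le hpx
            rw [(hd.fun_add (hlin x)).deriv]
            have h2 : l ≤ y x := hyl x hx.le
            nlinarith [mul_nonneg (mul_nonneg hαβ.le (sub_nonneg.2 h2))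
              (show (0:ℝ) ≤ y x + l - p by nlinarith)]
        have hT : (0:ℝ) ≤ (y 0 + 1)/δ := div_nonneg (by linarith) hδ0.le
        have hval := hmg (Set.mem_Ici.2 le_rfl) (Set.mem_Ici.2 hT) hT
        simp only at hval
        have h2δ : δ * ((y 0 + 1)/δ) = y 0 + 1 := by field_simp
        have hy0T : 0 ≤ y ((y 0 + 1)/δ) := (hrange _ hT).1
        nlinarith
  exact ⟨hAnti, hconv⟩
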